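/- For every integer σ ≥ 2, the dihedral group D_{σ−1} = ⟨x, y | x^{σ−1}, y², yxyx⟩ of order 2(σ − 1) admits a (0; 2, 2, 2, 2, 2, 2)-generating vector, namely (y, y, xy, xy, y, y); consequently (0; 2, 2, 2, 2, 2, 2) is an actual signature for every genus σ ≥ 2. -/

import Mathlib

/-- The Riemann–Hurwitz formula `σ - 1 = N (h - 1 + (1/2) Σ (1 - 1/mᵢ))`
as an equality of rational numbers. -/
def RHFormula (σ N h : ℕ) (m : List ℕ) : Prop :=
  (σ : ℚ) - 1 = (N : ℚ) * ((h : ℚ) - 1 + (1 / 2) * (m.map (fun x => 1 - 1 / (x : ℚ))).sum)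

/-- `(h; m₁, …, m_r)` is a potential signature for genus `σ`: each `mᵢ ≥ 2` and there is
a positive integer `N` with `mᵢ ∣ N` for all `i` satisfying the Riemann–Hurwitz formula. -/
def IsPotentialSignature (σ h : ℕ) (m : List ℕ) : Prop :=
  (∀ x ∈ m, 2 ≤ x) ∧ ∃ N : ℕ, 0 < N ∧ (∀ x ∈ m, x ∣ N) ∧ RHFormula σ N h m

/-- The set `P_σ` of potential signatures for genus `σ`, as a set of pairs `(h, [m₁, …, m_r])`. -/
def PotSig (σ : ℕ) : Set (ℕ × List ℕ) := {p | IsPotentialSignature σ p.1 p.2}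
open scoped commutatorElement in
/-- `(a, b, c)` is an `(h; m₁, …, m_r)`-generating vector for the group `G`:
the elements generate `G`, the order of `cᵢ` is `mᵢ`, and
`∏ ⁅aᵢ, bᵢ⁆ · ∏ cⱼ = 1`. -/
def IsGenVector (G : Type*) [Group G] (h : ℕ) (m : List ℕ)
    (a b : Fin h → G) (c : Fin m.length → G) : Prop :=
  Subgroup.closure (Set.range a ∪ Set.range b ∪ Set.range c) = ⊤ ∧
  (∀ i : Fin m.length, orderOf (c i) = m.get i) ∧
  (List.ofFn fun i => ⁅a i, b i⁆).prod * (List.ofFn c).prod = 1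

/-- `G` admits an `(h; m₁, …, m_r)`-generating vector. -/
def HasGenVector (G : Type*) [Group G] (h : ℕ) (m : List ℕ) : Prop :=
  ∃ (a b : Fin h → G) (c : Fin m.length → G), IsGenVector G h m a b c

/-- `(h; m₁, …, m_r)` (with all `mᵢ ≥ 2`) is an actual signature for genus `σ`: some finite
group `G` admits an `(h; m₁, …, m_r)`-generating vector and `N = |G|` satisfies the
Riemann–Hurwitz formula for genus `σ`. -/
def IsActualSignature (σ h : ℕ) (m : List ℕ) : Prop :=
  (∀ x ∈ m, 2 ≤ x) ∧
  ∃ (G : Type) (_ : Group G) (_ : Fintype G),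
    HasGenVector G h m ∧ RHFormula σ (Fintype.card G) h m

open DihedralGroup in
theorem aux_closure (n : ℕ) [NeZero n] :
    Subgroup.closure (Set.range (![] : Fin 0 → DihedralGroup n) ∪ Set.range ![] ∪
      Set.range ![sr 0, sr 0, r 1 * sr 0, r 1 * sr 0, sr 0, sr 0]) = ⊤ := by
  set H := Subgroup.closure (Set.range (![] : Fin 0 → DihedralGroup n) ∪ Set.range ![] ∪
      Set.range ![sr 0, sr 0, r 1 * sr 0, r 1 * sr 0, sr 0, sr 0]) with hH
  rw [eq_top_iff]
  have hsr0 : (sr 0 : DihedralGroup n) ∈ H := Subgroup.subset_closure (Or.inr ⟨0, rfl⟩)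
  have hsr1 : (sr (-1) : DihedralGroup n) ∈ H := by
    have : (r 1 * sr 0 : DihedralGroup n) = sr (-1) := by rw [r_mul_sr]; ring_nf
    exact this ▸ Subgroup.subset_closure (Or.inr ⟨2, rfl⟩)
  have hr1 : (r 1 : DihedralGroup n) ∈ H := by
    have : (sr (-1) * sr 0 : DihedralGroup n) = r 1 := by rw [sr_mul_sr]; ring_nf
    exact this ▸ mul_mem hsr1 hsr0
  rintro (⟨i⟩ | ⟨j⟩) -
  · have : (r i : DihedralGroup n) = (r 1) ^ (i.val) := by
      rw [r_one_pow, ZMod.natCast_val, ZMod.cast_id]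
    exact this ▸ pow_mem hr1 _
  · have : (sr j : DihedralGroup n) = (r 1) ^ ((-j).val) * sr 0 := by
      rw [r_one_pow, ZMod.natCast_val, ZMod.cast_id, r_mul_sr]; ring_nf
    exact this ▸ mul_mem (pow_mem hr1 _) hsr0

open DihedralGroup in
theorem aux_genvec (n : ℕ) [NeZero n] :
    IsGenVector (DihedralGroup n) 0 [2, 2, 2, 2, 2, 2] ![] ![]
      ![sr 0, sr 0, r 1 * sr 0, r 1 * sr 0, sr 0, sr 0] := by
  refine ⟨aux_closure n, ?_, ?_⟩
  · intro i
    fin_cases i <;> exact orderOf_sr _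
  · simp [List.ofFn_succ, r_mul_sr, sr_mul_sr, r_mul_r, sr_mul_r, one_def, -r_zero]

/-- For every `σ ≥ 2`, the dihedral group of order `2(σ - 1)` admits a
`(0; 2, 2, 2, 2, 2, 2)`-generating vector, namely `(y, y, xy, xy, y, y)`; consequently
`(0; 2, 2, 2, 2, 2, 2)` is an actual signature for every genus `σ ≥ 2`. -/
theorem dihedral_genVector_six_twos (σ : ℕ) (hσ : 2 ≤ σ) :
    Nat.card (DihedralGroup (σ - 1)) = 2 * (σ - 1) ∧
    IsGenVector (DihedralGroup (σ - 1)) 0 [2, 2, 2, 2, 2, 2] ![] ![]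
      ![DihedralGroup.sr 0, DihedralGroup.sr 0,
        DihedralGroup.r 1 * DihedralGroup.sr 0, DihedralGroup.r 1 * DihedralGroup.sr 0,
        DihedralGroup.sr 0, DihedralGroup.sr 0] ∧
    IsActualSignature σ 0 [2, 2, 2, 2, 2, 2] := by
  haveI : NeZero (σ - 1) := ⟨by omega⟩
  refine ⟨DihedralGroup.nat_card, aux_genvec (σ - 1), ?_, ?_⟩
  · intro x hx; fin_cases hx <;> norm_num
  · refine ⟨DihedralGroup (σ - 1), inferInstance, inferInstance,
      ⟨![], ![], _, aux_genvec (σ - 1)⟩, ?_⟩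
    rw [RHFormula, DihedralGroup.card]
    have h1 : ((σ - 1 : ℕ) : ℚ) = (σ : ℚ) - 1 := by
      push_cast [Nat.cast_sub (by omega : 1 ≤ σ)]; ring
    simp [h1]
    ring
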